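/- The Haar shift ℌ f = Σ_{I∈𝒟} ⟨f,h_I⟩ g_I is bounded on L²(ℝ) with operator norm at most √2, where g_I = Dil_I^{(2)} g and g = 2^{−1/2}(h_{(−1/2,0)} + h_{(0,1/2)}). -/

import Mathlib

open MeasureTheory

/-- The basic Haar function `h = -𝟙_{(-1/2,0)} + 𝟙_{(0,1/2)}`. -/
noncomputable def haarBase : ℝ → ℝ := fun x =>
  Set.indicator (Set.Ioo (0 : ℝ) (1 / 2)) (fun _ => (1 : ℝ)) x
    - Set.indicator (Set.Ioo (-(1 / 2) : ℝ) 0) (fun _ => (1 : ℝ)) x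

/-- The dyadic interval `2^k (j, j+1)`. -/
def dyadicI (k j : ℤ) : Set ℝ := Set.Ioo ((2 : ℝ) ^ k * j) ((2 : ℝ) ^ k * (j + 1))

/-- The `L²`-normalized Haar function `h_I` associated to the dyadic interval
`I = 2^k(j, j+1)`, of center `2^k (j + 1/2)` and length `2^k`. -/
noncomputable def haarD (k j : ℤ) : ℝ → ℝ := fun x =>
  ((2 : ℝ) ^ k) ^ (-(1 / 2) : ℝ) * haarBase ((x - (2 : ℝ) ^ k * (j + 1 / 2)) / (2 : ℝ) ^ k)

/-- `h_I^1 = |I|^{-1/2} 𝟙_I` for the dyadic interval `I = 2^k(j, j+1)`. -/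
noncomputable def haarOneD (k j : ℤ) : ℝ → ℝ := fun x =>
  ((2 : ℝ) ^ k) ^ (-(1 / 2) : ℝ) * Set.indicator (dyadicI k j) (fun _ => (1 : ℝ)) x

/-- The function `g = -𝟙_{(-1/2,-1/4)} + 𝟙_{(-1/4,1/4)} - 𝟙_{(1/4,1/2)}`. -/
noncomputable def gBase : ℝ → ℝ := fun x =>
  Set.indicator (Set.Ioo (-(1 / 4) : ℝ) (1 / 4)) (fun _ => (1 : ℝ)) x
    - Set.indicator (Set.Ioo (-(1 / 2) : ℝ) (-(1 / 4))) (fun _ => (1 : ℝ)) x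
    - Set.indicator (Set.Ioo ((1 / 4) : ℝ) (1 / 2)) (fun _ => (1 : ℝ)) x

/-- `g_I = Dil_I^{(2)} g` for the dyadic interval `I = 2^k(j, j+1)`. -/
noncomputable def gD (k j : ℤ) : ℝ → ℝ := fun x =>
  ((2 : ℝ) ^ k) ^ (-(1 / 2) : ℝ) * gBase ((x - (2 : ℝ) ^ k * (j + 1 / 2)) / (2 : ℝ) ^ k)


open Set
open scoped ENNReal NNReal

noncomputable def cC (k : ℤ) : ℝ := ((2 : ℝ) ^ k) ^ (-(1 / 2) : ℝ)

lemma two_zpow_pos (k : ℤ) : (0:ℝ) < (2:ℝ) ^ k := zpow_pos (by norm_num) k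

lemma cC_pos (k : ℤ) : 0 < cC k := Real.rpow_pos_of_pos (two_zpow_pos k) _

lemma cC_eq (k : ℤ) : cC k = (2:ℝ) ^ (-(k:ℝ)/2) := by
  rw [cC, ← Real.rpow_intCast 2 k, ← Real.rpow_mul (by norm_num : (0:ℝ) ≤ 2)]
  ring_nf

lemma cC_sq (k : ℤ) : cC k ^ 2 = ((2:ℝ) ^ k)⁻¹ := by
  rw [cC_eq, ← Real.rpow_natCast ((2:ℝ) ^ (-(k:ℝ)/2)) 2,
    ← Real.rpow_mul (by norm_num : (0:ℝ) ≤ 2),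
    show (-(k:ℝ)/2) * (2:ℕ) = -(k:ℝ) by push_cast; ring,
    Real.rpow_neg (by norm_num), Real.rpow_intCast]

lemma cC_succ (k : ℤ) : (Real.sqrt 2)⁻¹ * cC (k - 1) = cC k := by
  rw [cC_eq, cC_eq, show (2:ℝ) = ((2:ℝ):ℝ) from rfl, Real.sqrt_eq_rpow,
    ← Real.rpow_neg (by norm_num : (0:ℝ) ≤ 2),
    ← Real.rpow_add (by norm_num : (0:ℝ) < 2)]
  push_cast
  ring_nf

noncomputable def ind (s : Set ℝ) (x : ℝ) : ℝ := Set.indicator s (fun _ => (1:ℝ)) x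

lemma ind_comp (u v m h : ℝ) (hh : 0 < h) (x : ℝ) :
    ind (Ioo u v) ((x - m) / h) = ind (Ioo (m + h * u) (m + h * v)) x := by
  have hiff : (x - m) / h ∈ Ioo u v ↔ x ∈ Ioo (m + h * u) (m + h * v) := by
    rw [Set.mem_Ioo, Set.mem_Ioo, lt_div_iff₀ hh, div_lt_iff₀ hh]
    constructor <;> rintro ⟨h1, h2⟩ <;> constructor <;> nlinarith
  simp only [ind, Set.indicator_apply, hiff]

lemma haarD_eq (k j : ℤ) (x : ℝ) :
    haarD k j x = cC k * (ind (Ioo ((2:ℝ)^k * (j + 1/2)) ((2:ℝ)^k * (j+1))) x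
      - ind (Ioo ((2:ℝ)^k * j) ((2:ℝ)^k * (j + 1/2))) x) := by
  have h2 := two_zpow_pos k
  show ((2 : ℝ) ^ k) ^ (-(1 / 2) : ℝ) *
      (ind (Ioo (0:ℝ) (1/2)) ((x - (2 : ℝ) ^ k * (j + 1 / 2)) / (2 : ℝ) ^ k)
        - ind (Ioo (-(1/2):ℝ) 0) ((x - (2 : ℝ) ^ k * (j + 1 / 2)) / (2 : ℝ) ^ k)) = _
  rw [ind_comp _ _ _ _ h2, ind_comp _ _ _ _ h2, cC]
  congr 3 <;> ring

lemma gD_eq (k j : ℤ) (x : ℝ) :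
    gD k j x = cC k * (ind (Ioo ((2:ℝ)^k * (j + 1/4)) ((2:ℝ)^k * (j + 3/4))) x
      - ind (Ioo ((2:ℝ)^k * j) ((2:ℝ)^k * (j + 1/4))) x
      - ind (Ioo ((2:ℝ)^k * (j + 3/4)) ((2:ℝ)^k * (j+1))) x) := by
  have h2 := two_zpow_pos k
  show ((2 : ℝ) ^ k) ^ (-(1 / 2) : ℝ) *
      (ind (Ioo (-(1/4):ℝ) (1/4)) ((x - (2 : ℝ) ^ k * (j + 1 / 2)) / (2 : ℝ) ^ k)
        - ind (Ioo (-(1/2):ℝ) (-(1/4))) ((x - (2 : ℝ) ^ k * (j + 1 / 2)) / (2 : ℝ) ^ k)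
        - ind (Ioo ((1/4):ℝ) (1/2)) ((x - (2 : ℝ) ^ k * (j + 1 / 2)) / (2 : ℝ) ^ k)) = _
  rw [ind_comp _ _ _ _ h2, ind_comp _ _ _ _ h2, ind_comp _ _ _ _ h2, cC]
  congr 2
  · congr 2 <;> congr 1 <;> ring
  · congr 1 <;> ring

lemma abm (k j : ℤ) : (2:ℝ)^k * j < (2:ℝ)^k * (j + 1/2) ∧
    (2:ℝ)^k * (j + 1/2) < (2:ℝ)^k * (j+1) := by
  have h2 := two_zpow_pos k
  constructor <;> nlinarith

lemma haarD_val_pos {k j : ℤ} {x : ℝ} (hx : x ∈ Ioo ((2:ℝ)^k * (j + 1/2)) ((2:ℝ)^k * (j+1))) :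
    haarD k j x = cC k := by
  have h1 : x ∉ Ioo ((2:ℝ)^k * j) ((2:ℝ)^k * (j + 1/2)) := by
    intro h; exact absurd hx.1 (not_lt.2 h.2.le)
  rw [haarD_eq, ind, ind, Set.indicator_of_mem hx, Set.indicator_of_notMem h1]
  ring

lemma haarD_val_neg {k j : ℤ} {x : ℝ} (hx : x ∈ Ioo ((2:ℝ)^k * j) ((2:ℝ)^k * (j + 1/2))) :
    haarD k j x = -cC k := by
  have h1 : x ∉ Ioo ((2:ℝ)^k * (j + 1/2)) ((2:ℝ)^k * (j+1)) := by
    intro h; exact absurd hx.2 (not_lt.2 h.1.le)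
  rw [haarD_eq, ind, ind, Set.indicator_of_mem hx, Set.indicator_of_notMem h1]
  ring

lemma haarD_zero {k j : ℤ} {x : ℝ} (hx : x ∉ Ioo ((2:ℝ)^k * j) ((2:ℝ)^k * (j+1))) :
    haarD k j x = 0 := by
  obtain ⟨h1, h2⟩ := abm k j
  have e1 : x ∉ Ioo ((2:ℝ)^k * (j + 1/2)) ((2:ℝ)^k * (j+1)) := by
    intro h; exact hx ⟨h1.trans h.1, h.2⟩
  have e2 : x ∉ Ioo ((2:ℝ)^k * j) ((2:ℝ)^k * (j + 1/2)) := by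
    intro h; exact hx ⟨h.1, h.2.trans h2⟩
  rw [haarD_eq, ind, ind, Set.indicator_of_notMem e1, Set.indicator_of_notMem e2]
  ring

lemma ind_integrable (a b : ℝ) : Integrable (ind (Ioo a b)) volume := by
  rw [show ind (Ioo a b) = Set.indicator (Ioo a b) (fun _ => (1:ℝ)) from rfl]
  exact (integrable_indicator_iff measurableSet_Ioo).2
    (integrableOn_const measure_Ioo_lt_top.ne)

lemma ind_integral {a b : ℝ} (h : a ≤ b) : ∫ x, ind (Ioo a b) x = b - a := by
  rw [show (fun x => ind (Ioo a b) x) = Set.indicator (Ioo a b) (fun _ => (1:ℝ)) from rfl,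
    integral_indicator measurableSet_Ioo, setIntegral_const, Real.volume_real_Ioo_of_le h]
  simp

lemma haarD_integrable (k j : ℤ) : Integrable (haarD k j) volume := by
  rw [show haarD k j = fun x => cC k * (ind (Ioo ((2:ℝ)^k * (j + 1/2)) ((2:ℝ)^k * (j+1))) x
      - ind (Ioo ((2:ℝ)^k * j) ((2:ℝ)^k * (j + 1/2))) x) from funext (haarD_eq k j)]
  exact (((ind_integrable _ _).sub (ind_integrable _ _)).const_mul _)

lemma integral_haarD (k j : ℤ) : ∫ x, haarD k j x = 0 := by
  obtain ⟨h1, h2⟩ := abm k j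
  rw [show (fun x => haarD k j x) = fun x => cC k * (ind (Ioo ((2:ℝ)^k * (j + 1/2)) ((2:ℝ)^k * (j+1))) x
      - ind (Ioo ((2:ℝ)^k * j) ((2:ℝ)^k * (j + 1/2))) x) from funext (haarD_eq k j),
    integral_const_mul, integral_sub (ind_integrable _ _) (ind_integrable _ _),
    ind_integral h2.le, ind_integral h1.le]
  ring

lemma ind_measurable (a b : ℝ) : Measurable (ind (Ioo a b)) :=
  measurable_const.indicator measurableSet_Ioo

lemma haarD_measurable (k j : ℤ) : Measurable (haarD k j) := by
  rw [show haarD k j = fun x => cC k * (ind (Ioo ((2:ℝ)^k * (j + 1/2)) ((2:ℝ)^k * (j+1))) x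
      - ind (Ioo ((2:ℝ)^k * j) ((2:ℝ)^k * (j + 1/2))) x) from funext (haarD_eq k j)]
  exact (((ind_measurable _ _).sub (ind_measurable _ _)).const_mul _)

lemma gD_measurable (k j : ℤ) : Measurable (gD k j) := by
  rw [show gD k j = fun x => cC k * (ind (Ioo ((2:ℝ)^k * (j + 1/4)) ((2:ℝ)^k * (j + 3/4))) x
      - ind (Ioo ((2:ℝ)^k * j) ((2:ℝ)^k * (j + 1/4))) x
      - ind (Ioo ((2:ℝ)^k * (j + 3/4)) ((2:ℝ)^k * (j+1))) x) from funext (gD_eq k j)]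
  exact ((((ind_measurable _ _).sub (ind_measurable _ _)).sub (ind_measurable _ _)).const_mul _)

lemma ind_memLp (a b : ℝ) : MemLp (ind (Ioo a b)) 2 volume := by
  rw [show ind (Ioo a b) = Set.indicator (Ioo a b) (fun _ => (1:ℝ)) from rfl]
  exact memLp_indicator_const 2 measurableSet_Ioo 1 (Or.inr measure_Ioo_lt_top.ne)

lemma haarD_memLp (k j : ℤ) : MemLp (haarD k j) 2 volume := by
  rw [show haarD k j = fun x => cC k * (ind (Ioo ((2:ℝ)^k * (j + 1/2)) ((2:ℝ)^k * (j+1))) x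
      - ind (Ioo ((2:ℝ)^k * j) ((2:ℝ)^k * (j + 1/2))) x) from funext (haarD_eq k j)]
  exact (((ind_memLp _ _).sub (ind_memLp _ _)).const_mul _)

lemma haarD_sq (k j : ℤ) (x : ℝ) :
    haarD k j x * haarD k j x = cC k ^ 2 * (ind (Ioo ((2:ℝ)^k * (j + 1/2)) ((2:ℝ)^k * (j+1))) x
      + ind (Ioo ((2:ℝ)^k * j) ((2:ℝ)^k * (j + 1/2))) x) := by
  by_cases h1 : x ∈ Ioo ((2:ℝ)^k * (j + 1/2)) ((2:ℝ)^k * (j+1))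
  · have h2 : x ∉ Ioo ((2:ℝ)^k * j) ((2:ℝ)^k * (j + 1/2)) := by
      intro h; exact absurd h1.1 (not_lt.2 h.2.le)
    rw [haarD_val_pos h1, ind, ind, Set.indicator_of_mem h1, Set.indicator_of_notMem h2]
    ring
  · by_cases h2 : x ∈ Ioo ((2:ℝ)^k * j) ((2:ℝ)^k * (j + 1/2))
    · rw [haarD_val_neg h2, ind, ind, Set.indicator_of_notMem h1, Set.indicator_of_mem h2]
      ring
    · rw [haarD_eq, ind, ind, Set.indicator_of_notMem h1, Set.indicator_of_notMem h2]
      ring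

lemma integral_haarD_sq (k j : ℤ) : ∫ x, haarD k j x * haarD k j x = 1 := by
  obtain ⟨h1, h2⟩ := abm k j
  rw [show (fun x => haarD k j x * haarD k j x) = fun x => cC k ^ 2 *
      (ind (Ioo ((2:ℝ)^k * (j + 1/2)) ((2:ℝ)^k * (j+1))) x
        + ind (Ioo ((2:ℝ)^k * j) ((2:ℝ)^k * (j + 1/2))) x) from funext (haarD_sq k j),
    integral_const_mul, integral_add (ind_integrable _ _) (ind_integrable _ _),
    ind_integral h2.le, ind_integral h1.le, cC_sq]
  have h2 := two_zpow_pos k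
  field_simp
  ring

lemma integral_haarD_mul_same {k j j' : ℤ} (h : j ≠ j') :
    ∫ x, haarD k j x * haarD k j' x = 0 := by
  have hp := two_zpow_pos k
  have key : ∀ x, haarD k j x * haarD k j' x = 0 := by
    intro x
    by_cases hx : x ∈ Ioo ((2:ℝ)^k * j') ((2:ℝ)^k * (j'+1))
    · have hz : haarD k j x = 0 := by
        apply haarD_zero
        intro hx2
        rcases lt_or_gt_of_ne h with hlt | hlt
        · have : ((j:ℝ) + 1) ≤ (j':ℝ) := by exact_mod_cast hlt
          have := hx.1; have := hx2.2; nlinarith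
        · have : ((j':ℝ) + 1) ≤ (j:ℝ) := by exact_mod_cast hlt
          have := hx.2; have := hx2.1; nlinarith
      rw [hz, zero_mul]
    · rw [haarD_zero hx, mul_zero]
  rw [show (fun x => haarD k j x * haarD k j' x) = fun _ => (0:ℝ) from funext key]
  simp

lemma integral_haarD_mul_lt {k k' : ℤ} (hkk : k' < k) (j j' : ℤ) :
    ∫ x, haarD k j x * haarD k' j' x = 0 := by
  have hp := two_zpow_pos k'
  set e : ℕ := (k - k' - 1).toNat with he
  have hk : k = k' + e + 1 := by
    have := Int.toNat_of_nonneg (by omega : (0:ℤ) ≤ k - k' - 1)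
    omega
  set N : ℤ := 2 ^ e with hNdef
  have hN : 1 ≤ N := one_le_pow₀ (by norm_num)
  have h2k : (2:ℝ)^k = (2:ℝ)^k' * (2 * (N:ℝ)) := by
    have : ((N:ℤ):ℝ) = (2:ℝ) ^ (e:ℤ) := by push_cast [hNdef, zpow_natCast]; norm_num
    rw [this, hk]
    rw [show k' + (e:ℤ) + 1 = k' + ((e:ℤ) + 1) by ring, zpow_add₀ (by norm_num : (2:ℝ) ≠ 0),
      zpow_add₀ (by norm_num : (2:ℝ) ≠ 0)]
    ring
  have ha : (2:ℝ)^k * j = (2:ℝ)^k' * (2*(N:ℝ)*(j:ℝ)) := by rw [h2k]; ring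
  have hm : (2:ℝ)^k * (j + 1/2) = (2:ℝ)^k' * (2*(N:ℝ)*(j:ℝ) + (N:ℝ)) := by rw [h2k]; ring
  have hb : (2:ℝ)^k * (j + 1) = (2:ℝ)^k' * (2*(N:ℝ)*(j:ℝ) + 2*(N:ℝ)) := by rw [h2k]; ring
  rcases (by omega : j' + 1 ≤ 2*N*j ∨ 2*N*j + 2*N ≤ j' ∨ (2*N*j ≤ j' ∧ j' + 1 ≤ 2*N*j + N)
      ∨ (2*N*j + N ≤ j' ∧ j' + 1 ≤ 2*N*j + 2*N)) with h | h | h | h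
  · have hc : ((j':ℝ) + 1) ≤ 2*(N:ℝ)*(j:ℝ) := by exact_mod_cast h
    have key : ∀ x, haarD k j x * haarD k' j' x = 0 := by
      intro x
      by_cases hx : x ∈ Ioo ((2:ℝ)^k' * j') ((2:ℝ)^k' * (j'+1))
      · have hz : haarD k j x = 0 := by
          apply haarD_zero
          intro hx2
          have := hx.2; have := hx2.1; rw [ha] at *; nlinarith
        rw [hz, zero_mul]
      · rw [haarD_zero hx, mul_zero]
    rw [show (fun x => haarD k j x * haarD k' j' x) = fun _ => (0:ℝ) from funext key]
    simp
  · have hc : 2*(N:ℝ)*(j:ℝ) + 2*(N:ℝ) ≤ (j':ℝ) := by exact_mod_cast h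
    have key : ∀ x, haarD k j x * haarD k' j' x = 0 := by
      intro x
      by_cases hx : x ∈ Ioo ((2:ℝ)^k' * j') ((2:ℝ)^k' * (j'+1))
      · have hz : haarD k j x = 0 := by
          apply haarD_zero
          intro hx2
          have := hx.1; have := hx2.2; rw [hb] at *; nlinarith
        rw [hz, zero_mul]
      · rw [haarD_zero hx, mul_zero]
    rw [show (fun x => haarD k j x * haarD k' j' x) = fun _ => (0:ℝ) from funext key]
    simp
  · have hc1 : 2*(N:ℝ)*(j:ℝ) ≤ (j':ℝ) := by exact_mod_cast h.1
    have hc2 : ((j':ℝ) + 1) ≤ 2*(N:ℝ)*(j:ℝ) + (N:ℝ) := by exact_mod_cast h.2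
    have key : ∀ x, haarD k j x * haarD k' j' x = (-cC k) * haarD k' j' x := by
      intro x
      by_cases hx : x ∈ Ioo ((2:ℝ)^k' * j') ((2:ℝ)^k' * (j'+1))
      · rw [haarD_val_neg ⟨by rw [ha]; have := hx.1; nlinarith,
          by rw [hm]; have := hx.2; nlinarith⟩]
      · rw [haarD_zero hx, mul_zero, mul_zero]
    rw [show (fun x => haarD k j x * haarD k' j' x) = fun x => (-cC k) * haarD k' j' x
      from funext key, integral_const_mul, integral_haarD, mul_zero]
  · have hc1 : 2*(N:ℝ)*(j:ℝ) + (N:ℝ) ≤ (j':ℝ) := by exact_mod_cast h.1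
    have hc2 : ((j':ℝ) + 1) ≤ 2*(N:ℝ)*(j:ℝ) + 2*(N:ℝ) := by exact_mod_cast h.2
    have key : ∀ x, haarD k j x * haarD k' j' x = (cC k) * haarD k' j' x := by
      intro x
      by_cases hx : x ∈ Ioo ((2:ℝ)^k' * j') ((2:ℝ)^k' * (j'+1))
      · rw [haarD_val_pos ⟨by rw [hm]; have := hx.1; nlinarith,
          by rw [hb]; have := hx.2; nlinarith⟩]
      · rw [haarD_zero hx, mul_zero, mul_zero]
    rw [show (fun x => haarD k j x * haarD k' j' x) = fun x => (cC k) * haarD k' j' x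
      from funext key, integral_const_mul, integral_haarD, mul_zero]

lemma integral_haarD_mul (q q' : ℤ × ℤ) (h : q ≠ q') :
    ∫ x, haarD q.1 q.2 x * haarD q'.1 q'.2 x = 0 := by
  obtain ⟨k, j⟩ := q; obtain ⟨k', j'⟩ := q'
  rcases lt_trichotomy k k' with hk | hk | hk
  · rw [show (fun x => haarD k j x * haarD k' j' x) = fun x => haarD k' j' x * haarD k j x
      from funext fun x => mul_comm _ _]
    exact integral_haarD_mul_lt hk j' j
  · subst hk
    exact integral_haarD_mul_same (by simpa [Prod.ext_iff] using h)
  · exact integral_haarD_mul_lt hk j j'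

noncomputable def eH (q : ℤ × ℤ) : Lp ℝ 2 (volume : Measure ℝ) :=
  (haarD_memLp q.1 q.2).toLp (haarD q.1 q.2)

lemma inner_eH (q q' : ℤ × ℤ) :
    (inner ℝ (eH q) (eH q') : ℝ) = ∫ x, haarD q.1 q.2 x * haarD q'.1 q'.2 x := by
  rw [MeasureTheory.L2.inner_def]
  apply integral_congr_ae
  filter_upwards [MemLp.coeFn_toLp (haarD_memLp q.1 q.2),
    MemLp.coeFn_toLp (haarD_memLp q'.1 q'.2)] with x h1 h2
  simp [eH, h1, h2, RCLike.inner_apply, starRingEnd_apply]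
  ring

lemma orthonormal_eH : Orthonormal ℝ eH := by
  classical
  rw [orthonormal_iff_ite]
  intro q q'
  rw [inner_eH]
  by_cases h : q = q'
  · subst h; simp [integral_haarD_sq q.1 q.2]
  · simp [h, integral_haarD_mul q q' h]

lemma inner_eH_toLp (f : ℝ → ℝ) (hf : MemLp f 2 volume) (q : ℤ × ℤ) :
    (inner ℝ (eH q) (hf.toLp f) : ℝ) = ∫ y, f y * haarD q.1 q.2 y := by
  rw [MeasureTheory.L2.inner_def]
  apply integral_congr_ae
  filter_upwards [MemLp.coeFn_toLp (haarD_memLp q.1 q.2), MemLp.coeFn_toLp hf] with x h1 h2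
  simp [eH, h1, h2, RCLike.inner_apply, starRingEnd_apply]

lemma coeFn_finset_sum {ι : Type*} (s : Finset ι) (F : ι → Lp ℝ 2 (volume : Measure ℝ)) :
    ⇑(∑ i ∈ s, F i) =ᵐ[volume] fun x => ∑ i ∈ s, F i x := by
  classical
  induction s using Finset.induction_on with
  | empty =>
    simp only [Finset.sum_empty]
    filter_upwards [Lp.coeFn_zero (E := ℝ) (p := 2) (μ := (volume : Measure ℝ))] with x hx
    simpa using hx
  | insert a s hnm ih =>
    rw [Finset.sum_insert hnm]
    filter_upwards [Lp.coeFn_add (F a) (∑ i ∈ s, F i), ih] with x hx hx2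
    rw [hx]
    simp only [Pi.add_apply, hx2]
    rw [Finset.sum_insert hnm]

lemma ind_split {u w v x : ℝ} (h1 : u < w) (h2 : w < v) (hx : x ≠ w) :
    ind (Ioo u v) x = ind (Ioo u w) x + ind (Ioo w v) x := by
  rcases lt_or_gt_of_ne hx with h | h
  · have e1 : x ∉ Ioo w v := fun hm => absurd hm.1 (not_lt.2 h.le)
    have e2 : x ∈ Ioo u v ↔ x ∈ Ioo u w := by
      constructor
      · rintro ⟨ha, _⟩; exact ⟨ha, h⟩
      · rintro ⟨ha, hb⟩; exact ⟨ha, hb.trans h2⟩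
    simp only [ind, Set.indicator_apply, e2, Set.indicator_of_notMem e1]
    split_ifs <;> ring
  · have e1 : x ∉ Ioo u w := fun hm => absurd hm.2 (not_lt.2 h.le)
    have e2 : x ∈ Ioo u v ↔ x ∈ Ioo w v := by
      constructor
      · rintro ⟨_, hb⟩; exact ⟨h, hb⟩
      · rintro ⟨ha, hb⟩; exact ⟨h1.trans ha, hb⟩
    simp only [ind, Set.indicator_apply, e2, Set.indicator_of_notMem e1]
    split_ifs <;> ring

lemma gD_decomp (k j : ℤ) (x : ℝ) (hx : x ≠ (2:ℝ)^k * ((j:ℝ) + 1/2)) :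
    gD k j x = (Real.sqrt 2)⁻¹ * (haarD (k-1) (2*j) x - haarD (k-1) (2*j+1) x) := by
  obtain ⟨hab1, hab2⟩ := abm k j
  have h2 : (2:ℝ)^(k-1) = (2:ℝ)^k / 2 := by
    rw [zpow_sub₀ (by norm_num : (2:ℝ) ≠ 0)]; norm_num
  have E1 : (2:ℝ)^(k-1) * ((2*j:ℤ):ℝ) = (2:ℝ)^k * j := by push_cast; rw [h2]; ring
  have E2 : (2:ℝ)^(k-1) * (((2*j:ℤ):ℝ) + 1/2) = (2:ℝ)^k * ((j:ℝ) + 1/4) := by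
    push_cast; rw [h2]; ring
  have E3 : (2:ℝ)^(k-1) * (((2*j:ℤ):ℝ) + 1) = (2:ℝ)^k * ((j:ℝ) + 1/2) := by
    push_cast; rw [h2]; ring
  have E4 : (2:ℝ)^(k-1) * ((2*j+1:ℤ):ℝ) = (2:ℝ)^k * ((j:ℝ) + 1/2) := by
    push_cast; rw [h2]; ring
  have E5 : (2:ℝ)^(k-1) * (((2*j+1:ℤ):ℝ) + 1/2) = (2:ℝ)^k * ((j:ℝ) + 3/4) := by
    push_cast; rw [h2]; ring
  have E6 : (2:ℝ)^(k-1) * (((2*j+1:ℤ):ℝ) + 1) = (2:ℝ)^k * ((j:ℝ) + 1) := by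
    push_cast; rw [h2]; ring
  have hp1 : (2:ℝ)^k * ((j:ℝ) + 1/4) < (2:ℝ)^k * ((j:ℝ) + 1/2) := by
    have := two_zpow_pos k; nlinarith
  have hp2 : (2:ℝ)^k * ((j:ℝ) + 1/2) < (2:ℝ)^k * ((j:ℝ) + 3/4) := by
    have := two_zpow_pos k; nlinarith
  have hsplit := ind_split hp1 hp2 hx
  rw [gD_eq, haarD_eq, haarD_eq, E1, E2, E3, E4, E5, E6, ← cC_succ k, hsplit]
  ring

lemma ae_ne_pt (p : ℝ) : ∀ᵐ x : ℝ, x ≠ p := by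
  rw [MeasureTheory.ae_iff]
  have : {a : ℝ | ¬ a ≠ p} = {p} := by ext y; simp
  rw [this]
  exact measure_singleton p

lemma partial_bound (f : ℝ → ℝ) (hf : MemLp f 2 volume) (s : Finset (ℤ × ℤ)) :
    eLpNorm (fun x => ∑ q ∈ s, (∫ y, f y * haarD q.1 q.2 y) * gD q.1 q.2 x) 2 volume
      ≤ ENNReal.ofReal (Real.sqrt 2) * eLpNorm f 2 volume := by
  classical
  set c : ℤ × ℤ → ℝ := fun q => ∫ y, f y * haarD q.1 q.2 y with hc
  set r : ℝ := (Real.sqrt 2)⁻¹ with hr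
  have hs2 : (0:ℝ) < Real.sqrt 2 := Real.sqrt_pos.2 (by norm_num)
  have hr0 : 0 ≤ r := inv_nonneg.2 hs2.le
  set pL : ℤ × ℤ → ℤ × ℤ := fun q => (q.1 - 1, 2*q.2) with hpL
  set pR : ℤ × ℤ → ℤ × ℤ := fun q => (q.1 - 1, 2*q.2 + 1) with hpR
  have hL : Function.Injective pL := by
    intro a b h
    simp only [hpL, Prod.mk.injEq] at h
    exact Prod.ext (by omega) (by omega)
  have hR : Function.Injective pR := by
    intro a b h
    simp only [hpR, Prod.mk.injEq] at h
    exact Prod.ext (by omega) (by omega)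
  set Y : Lp ℝ 2 (volume : Measure ℝ) := ∑ q ∈ s, (r * c q) • eH (pL q) with hY
  set Z : Lp ℝ 2 (volume : Measure ℝ) := ∑ q ∈ s, (r * c q) • eH (pR q) with hZ
  set F : Lp ℝ 2 (volume : Measure ℝ) := hf.toLp f with hF
  -- a.e. identification
  have A4 : ∀ᵐ x : ℝ, ∀ q : ℤ × ℤ, ((r * c q) • eH (pL q)) x
      = (r * c q) * haarD (q.1 - 1) (2*q.2) x := by
    rw [MeasureTheory.ae_all_iff]
    intro q
    filter_upwards [Lp.coeFn_smul (r * c q) (eH (pL q)),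
      MemLp.coeFn_toLp (haarD_memLp (pL q).1 (pL q).2)] with x h1 h2
    rw [h1]; simp only [Pi.smul_apply, smul_eq_mul]
    rw [show (eH (pL q)) x = haarD (q.1-1) (2*q.2) x from h2]
  have A5 : ∀ᵐ x : ℝ, ∀ q : ℤ × ℤ, ((r * c q) • eH (pR q)) x
      = (r * c q) * haarD (q.1 - 1) (2*q.2 + 1) x := by
    rw [MeasureTheory.ae_all_iff]
    intro q
    filter_upwards [Lp.coeFn_smul (r * c q) (eH (pR q)),
      MemLp.coeFn_toLp (haarD_memLp (pR q).1 (pR q).2)] with x h1 h2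
    rw [h1]; simp only [Pi.smul_apply, smul_eq_mul]
    rw [show (eH (pR q)) x = haarD (q.1-1) (2*q.2+1) x from h2]
  have A6 : ∀ᵐ x : ℝ, ∀ q : ℤ × ℤ, gD q.1 q.2 x
      = r * (haarD (q.1-1) (2*q.2) x - haarD (q.1-1) (2*q.2+1) x) := by
    rw [MeasureTheory.ae_all_iff]
    intro q
    filter_upwards [ae_ne_pt ((2:ℝ)^q.1 * ((q.2:ℝ) + 1/2))] with x hx
    exact gD_decomp q.1 q.2 x hx
  have hAE : (fun x => ∑ q ∈ s, c q * gD q.1 q.2 x) =ᵐ[volume] ⇑(Y - Z) := by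
    filter_upwards [Lp.coeFn_sub Y Z, coeFn_finset_sum s (fun q => (r * c q) • eH (pL q)),
      coeFn_finset_sum s (fun q => (r * c q) • eH (pR q)), A4, A5, A6] with x h1 h2 h3 h4 h5 h6
    rw [h1]
    simp only [Pi.sub_apply]
    rw [hY, hZ, h2, h3]
    rw [show ∑ q ∈ s, ((r * c q) • eH (pL q)) x = ∑ q ∈ s, (r * c q) * haarD (q.1-1) (2*q.2) x
      from Finset.sum_congr rfl fun q _ => h4 q]
    rw [show ∑ q ∈ s, ((r * c q) • eH (pR q)) x = ∑ q ∈ s, (r * c q) * haarD (q.1-1) (2*q.2+1) x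
      from Finset.sum_congr rfl fun q _ => h5 q]
    rw [← Finset.sum_sub_distrib]
    refine Finset.sum_congr rfl fun q _ => ?_
    rw [h6 q]
    ring
  -- Bessel
  have bessel : ∑ q ∈ s, (c q)^2 ≤ ‖F‖^2 := by
    have := orthonormal_eH.sum_inner_products_le (s := s) F
    calc ∑ q ∈ s, (c q)^2 = ∑ q ∈ s, ‖(inner ℝ (eH q) F : ℝ)‖^2 := by
          refine Finset.sum_congr rfl fun q _ => ?_
          rw [inner_eH_toLp f hf q, Real.norm_eq_abs, sq_abs]
      _ ≤ ‖F‖^2 := this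
  -- norms of Y and Z
  have normsum : ∀ (p : ℤ × ℤ → ℤ × ℤ) (hp : Function.Injective p),
      ‖(∑ q ∈ s, (r * c q) • eH (p q) : Lp ℝ 2 (volume : Measure ℝ))‖ ≤ r * ‖F‖ := by
    intro p hp
    have ho : Orthonormal ℝ (fun q => eH (p q)) := orthonormal_eH.comp p hp
    have hsq : ‖(∑ q ∈ s, (r * c q) • eH (p q) : Lp ℝ 2 (volume : Measure ℝ))‖^2
        = ∑ q ∈ s, (r * c q)^2 := by
      rw [← real_inner_self_eq_norm_sq]
      rw [show (∑ q ∈ s, (r * c q) • eH (p q)) = ∑ q ∈ s, (r * c q) • (fun q => eH (p q)) q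
        from rfl]
      rw [ho.inner_sum (fun q => r * c q) (fun q => r * c q) s]
      simp [RCLike.inner_apply, starRingEnd_apply, sq]
    have h1 : ‖(∑ q ∈ s, (r * c q) • eH (p q) : Lp ℝ 2 (volume : Measure ℝ))‖^2
        ≤ (r * ‖F‖)^2 := by
      rw [hsq]
      calc ∑ q ∈ s, (r * c q)^2 = r^2 * ∑ q ∈ s, (c q)^2 := by
            rw [Finset.mul_sum]; exact Finset.sum_congr rfl fun q _ => by ring
        _ ≤ r^2 * ‖F‖^2 := by nlinarith [sq_nonneg r]
        _ = (r * ‖F‖)^2 := by ring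
    have := Real.sqrt_le_sqrt h1
    rwa [Real.sqrt_sq (norm_nonneg _), Real.sqrt_sq (by positivity)] at this
  have hW : ‖(Y - Z : Lp ℝ 2 (volume : Measure ℝ))‖ ≤ Real.sqrt 2 * ‖F‖ := by
    have h1 := normsum pL hL
    have h2 := normsum pR hR
    have : r * ‖F‖ + r * ‖F‖ = Real.sqrt 2 * ‖F‖ := by
      have hss : Real.sqrt 2 * Real.sqrt 2 = 2 := Real.mul_self_sqrt (by norm_num)
      have h2r : (2:ℝ) * r = Real.sqrt 2 := by
        rw [hr, mul_inv_eq_iff_eq_mul₀ (ne_of_gt hs2)]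
        linarith
      calc r * ‖F‖ + r * ‖F‖ = (2 * r) * ‖F‖ := by ring
        _ = Real.sqrt 2 * ‖F‖ := by rw [h2r]
    calc ‖(Y - Z : Lp ℝ 2 (volume : Measure ℝ))‖ ≤ ‖Y‖ + ‖Z‖ := norm_sub_le _ _
      _ ≤ r * ‖F‖ + r * ‖F‖ := add_le_add h1 h2
      _ = Real.sqrt 2 * ‖F‖ := this
  -- conclude
  rw [eLpNorm_congr_ae hAE]
  have : eLpNorm (⇑(Y - Z)) 2 volume = ENNReal.ofReal ‖(Y - Z : Lp ℝ 2 (volume : Measure ℝ))‖ := by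
    rw [Lp.norm_def, ENNReal.ofReal_toReal (Lp.eLpNorm_ne_top _)]
  rw [this]
  calc ENNReal.ofReal ‖(Y - Z : Lp ℝ 2 (volume : Measure ℝ))‖
      ≤ ENNReal.ofReal (Real.sqrt 2 * ‖F‖) := ENNReal.ofReal_le_ofReal hW
    _ = ENNReal.ofReal (Real.sqrt 2) * ENNReal.ofReal ‖F‖ := ENNReal.ofReal_mul hs2.le
    _ = ENNReal.ofReal (Real.sqrt 2) * eLpNorm f 2 volume := by
        rw [hF, Lp.norm_toLp f hf, ENNReal.ofReal_toReal hf.2.ne]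

/-- the Haar shift `ℌ f = Σ_{I∈𝒟} ⟨f,h_I⟩ g_I` is bounded on `L²(ℝ)` with
operator norm at most `√2`. -/
theorem haar_shift_bounded (f : ℝ → ℝ) (hf : MemLp f 2 volume) :
    eLpNorm (fun x => ∑' q : ℤ × ℤ, (∫ y : ℝ, f y * haarD q.1 q.2 y) * gD q.1 q.2 x)
        2 volume
      ≤ ENNReal.ofReal (Real.sqrt 2) * eLpNorm f 2 volume := by
  classical
  set c : ℤ × ℤ → ℝ := fun q => ∫ y : ℝ, f y * haarD q.1 q.2 y with hc
  have hmeas_term : ∀ q : ℤ × ℤ, Measurable (fun x => c q * gD q.1 q.2 x) :=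
    fun q => (gD_measurable q.1 q.2).const_mul _
  set S : Set ℝ := {x | Summable (fun q : ℤ × ℤ => c q * gD q.1 q.2 x)} with hS
  have hmeasS : MeasurableSet S := by
    have hSeq : S = (fun x => ∑' q : ℤ × ℤ, (‖c q * gD q.1 q.2 x‖₊ : ℝ≥0∞)) ⁻¹' {⊤}ᶜ := by
      ext x
      simp only [hS, Set.mem_setOf_eq, Set.mem_preimage, Set.mem_compl_iff,
        Set.mem_singleton_iff]
      have h1 : (Summable fun q : ℤ × ℤ => c q * gD q.1 q.2 x)
          ↔ Summable (fun q : ℤ × ℤ => ((‖c q * gD q.1 q.2 x‖₊ : ℝ≥0) : ℝ)) := by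
        rw [← summable_norm_iff]
        simp_rw [coe_nnnorm]
      rw [h1, NNReal.summable_coe, ← ENNReal.tsum_coe_ne_top_iff_summable]
    rw [hSeq]
    exact (Measurable.ennreal_tsum fun q => (hmeas_term q).nnnorm.coe_nnreal_ennreal)
      ((measurableSet_singleton ⊤).compl)
  set sn : ℕ → Finset (ℤ × ℤ) :=
    fun n => Finset.Icc (-(n:ℤ)) (n:ℤ) ×ˢ Finset.Icc (-(n:ℤ)) (n:ℤ) with hsn
  have hmono : Monotone sn := by
    intro n m hnm
    apply Finset.product_subset_product <;>
      exact Finset.Icc_subset_Icc (by exact_mod_cast neg_le_neg (Int.ofNat_le.2 hnm))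
        (by exact_mod_cast Int.ofNat_le.2 hnm)
  have hexh : ∀ q : ℤ × ℤ, ∃ n : ℕ, q ∈ sn n := by
    intro q
    refine ⟨(max |q.1| |q.2|).toNat, ?_⟩
    have h1 : (0:ℤ) ≤ max |q.1| |q.2| := le_max_of_le_left (abs_nonneg _)
    have h2 : ((max |q.1| |q.2|).toNat : ℤ) = max |q.1| |q.2| := Int.toNat_of_nonneg h1
    simp only [hsn, Finset.mem_product, Finset.mem_Icc, h2]
    constructor <;> constructor <;>
      [skip; skip; skip; skip] <;>
      · first
        | (have := le_max_left |q.1| |q.2|; have := abs_le.1 (le_refl |q.1|); omega)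
        | (have := le_max_right |q.1| |q.2|; have := abs_le.1 (le_refl |q.2|); omega)
  have htends : Filter.Tendsto sn Filter.atTop Filter.atTop :=
    Filter.tendsto_atTop_finset_of_monotone hmono hexh
  set G : ℕ → ℝ → ℝ :=
    fun n => S.indicator (fun x => ∑ q ∈ sn n, c q * gD q.1 q.2 x) with hG
  have hGmeas : ∀ n, AEStronglyMeasurable (G n) volume := fun n =>
    (((sn n).measurable_sum fun q _ => hmeas_term q).indicator hmeasS).aestronglyMeasurable
  have hGlim : ∀ x : ℝ, Filter.Tendsto (fun n => G n x) Filter.atTop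
      (nhds (∑' q : ℤ × ℤ, c q * gD q.1 q.2 x)) := by
    intro x
    by_cases hx : x ∈ S
    · have hsum : Summable (fun q : ℤ × ℤ => c q * gD q.1 q.2 x) := hx
      have h1 : Filter.Tendsto (fun n => ∑ q ∈ sn n, c q * gD q.1 q.2 x) Filter.atTop
          (nhds (∑' q : ℤ × ℤ, c q * gD q.1 q.2 x)) := hsum.hasSum.comp htends
      have : (fun n => G n x) = fun n => ∑ q ∈ sn n, c q * gD q.1 q.2 x := by
        funext n; simp only [hG, Set.indicator_of_mem hx]
      rw [this]; exact h1
    · have hns : ¬ Summable (fun q : ℤ × ℤ => c q * gD q.1 q.2 x) := hx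
      rw [tsum_eq_zero_of_not_summable hns]
      have : (fun n => G n x) = fun _ => (0:ℝ) := by
        funext n; simp only [hG, Set.indicator_of_notMem hx]
      rw [this]; exact tendsto_const_nhds
  have hbound : ∀ n, eLpNorm (G n) 2 volume
      ≤ ENNReal.ofReal (Real.sqrt 2) * eLpNorm f 2 volume := fun n =>
    (eLpNorm_indicator_le _).trans (partial_bound f hf (sn n))
  calc eLpNorm (fun x => ∑' q : ℤ × ℤ, c q * gD q.1 q.2 x) 2 volume
      ≤ Filter.atTop.liminf fun n => eLpNorm (G n) 2 volume :=
        Lp.eLpNorm_lim_le_liminf_eLpNorm hGmeas _ (Filter.Eventually.of_forall hGlim)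
    _ ≤ ENNReal.ofReal (Real.sqrt 2) * eLpNorm f 2 volume :=
        Filter.liminf_le_of_frequently_le' (Filter.Frequently.of_forall hbound)
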